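/- Let EI > 0, k > 0, c ∈ ℝ, A ∈ ℝ, and set ω := (k/EI)^{1/4}, P_C := 2√(k·EI). Define y₁(x) := A·cos(ωx) and y₂(x) := c·A²·(9 + cos(2ωx))/(18k). Then for all x ∈ ℝ, EI·y₂''''(x) + P_C·y₂''(x) + k·y₂(x) = c·y₁(x)². (This is the second-order equation of the double-scale perturbation expansion y = ε y₁ + ε² y₂ + …, verifying that y₂ is the correct second-order correction.) -/

import Mathlib

private lemma cos_derivs (b D C : ℝ) :
    iteratedDeriv 2 (fun t => D + C * Real.cos (b * t)) = (fun x => -(C * b ^ 2) * Real.cos (b * x))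
    ∧ iteratedDeriv 4 (fun t => D + C * Real.cos (b * t)) = (fun x => C * b ^ 4 * Real.cos (b * x)) := by
  have hb : ∀ x : ℝ, HasDerivAt (fun t : ℝ => b * t) b x := fun x => by
    simpa using (hasDerivAt_id x).const_mul b
  have h0 : ∀ x : ℝ, HasDerivAt (fun t => D + C * Real.cos (b * t))
      (-(C * b) * Real.sin (b * x)) x := fun x => by
    have := (((Real.hasDerivAt_cos (b * x)).comp x (hb x)).const_mul C).const_add D
    exact this.congr_deriv (by ring)
  have h1 : ∀ x : ℝ, HasDerivAt (fun x => -(C * b) * Real.sin (b * x))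
      (-(C * b ^ 2) * Real.cos (b * x)) x := fun x => by
    have := ((Real.hasDerivAt_sin (b * x)).comp x (hb x)).const_mul (-(C * b))
    exact this.congr_deriv (by ring)
  have h2 : ∀ x : ℝ, HasDerivAt (fun x => -(C * b ^ 2) * Real.cos (b * x))
      (C * b ^ 3 * Real.sin (b * x)) x := fun x => by
    have := ((Real.hasDerivAt_cos (b * x)).comp x (hb x)).const_mul (-(C * b ^ 2))
    exact this.congr_deriv (by ring)
  have h3 : ∀ x : ℝ, HasDerivAt (fun x => C * b ^ 3 * Real.sin (b * x))
      (C * b ^ 4 * Real.cos (b * x)) x := fun x => by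
    have := ((Real.hasDerivAt_sin (b * x)).comp x (hb x)).const_mul (C * b ^ 3)
    exact this.congr_deriv (by ring)
  have d0 : deriv (fun t => D + C * Real.cos (b * t)) = fun x => -(C * b) * Real.sin (b * x) :=
    funext fun x => (h0 x).deriv
  have d1 : deriv (fun x => -(C * b) * Real.sin (b * x)) = fun x => -(C * b ^ 2) * Real.cos (b * x) :=
    funext fun x => (h1 x).deriv
  have d2 : deriv (fun x => -(C * b ^ 2) * Real.cos (b * x)) = fun x => C * b ^ 3 * Real.sin (b * x) :=
    funext fun x => (h2 x).deriv
  have d3 : deriv (fun x => C * b ^ 3 * Real.sin (b * x)) = fun x => C * b ^ 4 * Real.cos (b * x) :=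
    funext fun x => (h3 x).deriv
  have i2 : iteratedDeriv 2 (fun t => D + C * Real.cos (b * t))
      = fun x => -(C * b ^ 2) * Real.cos (b * x) := by
    rw [show (2 : ℕ) = 1 + 1 from rfl, iteratedDeriv_succ, iteratedDeriv_one, d0, d1]
  refine ⟨i2, ?_⟩
  rw [show (4 : ℕ) = 2 + 1 + 1 from rfl, iteratedDeriv_succ, iteratedDeriv_succ, i2, d2, d3]

/-- Second-order equation of the double-scale perturbation expansion for the
strut on a softening elastic foundation: with `y₁(x) = A·cos(ωx)` and
`y₂(x) = c·A²·(9 + cos(2ωx))/(18k)`, one has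
`EI·y₂'''' + P_C·y₂'' + k·y₂ = c·y₁²` at the critical load `P_C = 2√(k·EI)`. -/
theorem strut_second_order_perturbation
    (EI k c A : ℝ) (hEI : 0 < EI) (hk : 0 < k)
    (ω PC : ℝ) (hω : ω = (k / EI) ^ ((1 : ℝ) / 4)) (hPC : PC = 2 * Real.sqrt (k * EI)) :
    ∀ x : ℝ,
      EI * iteratedDeriv 4 (fun t => c * A ^ 2 * (9 + Real.cos (2 * ω * t)) / (18 * k)) x
        + PC * iteratedDeriv 2 (fun t => c * A ^ 2 * (9 + Real.cos (2 * ω * t)) / (18 * k)) x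
        + k * (c * A ^ 2 * (9 + Real.cos (2 * ω * x)) / (18 * k))
      = c * (A * Real.cos (ω * x)) ^ 2 := by
  intro x
  have hk' : (k : ℝ) ≠ 0 := hk.ne'
  have hEI' : (EI : ℝ) ≠ 0 := hEI.ne'
  set D : ℝ := c * A ^ 2 * 9 / (18 * k) with hD
  set C : ℝ := c * A ^ 2 / (18 * k) with hC
  have hfun : (fun t => c * A ^ 2 * (9 + Real.cos (2 * ω * t)) / (18 * k))
      = fun t => D + C * Real.cos (2 * ω * t) := by
    funext t; rw [hD, hC]; ring
  obtain ⟨i2, i4⟩ := cos_derivs (2 * ω) D C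
  rw [hfun, i2, i4]
  -- key algebraic facts
  have hkEI : (0 : ℝ) ≤ k / EI := (div_pos hk hEI).le
  have hω4 : EI * ω ^ 4 = k := by
    rw [hω, ← Real.rpow_natCast ((k / EI) ^ ((1 : ℝ) / 4)) 4, ← Real.rpow_mul hkEI]
    norm_num
    field_simp
  have hω2 : ω ^ 2 = Real.sqrt (k / EI) := by
    rw [hω, ← Real.rpow_natCast ((k / EI) ^ ((1 : ℝ) / 4)) 2, ← Real.rpow_mul hkEI,
      Real.sqrt_eq_rpow]
    norm_num
  have hPC2 : PC * ω ^ 2 = 2 * k := by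
    rw [hPC, hω2, mul_assoc, ← Real.sqrt_mul (by positivity)]
    rw [show k * EI * (k / EI) = k ^ 2 by field_simp, Real.sqrt_sq hk.le]
  have e1 : EI * (C * (2 * ω) ^ 4 * Real.cos (2 * ω * x))
      = 16 * k * C * Real.cos (2 * ω * x) := by
    linear_combination (16 * C * Real.cos (2 * ω * x)) * hω4
  have e2 : PC * (-(C * (2 * ω) ^ 2) * Real.cos (2 * ω * x))
      = -(8 * k * C * Real.cos (2 * ω * x)) := by
    linear_combination (-(4 * C * Real.cos (2 * ω * x))) * hPC2
  rw [e1, e2]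
  have hc2 : Real.cos (2 * ω * x) = 2 * Real.cos (ω * x) ^ 2 - 1 := by
    rw [show 2 * ω * x = 2 * (ω * x) by ring, Real.cos_two_mul]
  rw [hc2, hC]
  field_simp
  ring
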